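/- Let A be a unital C*-algebra, τ : A → ℂ a continuous linear tracial functional (τ(xy) = τ(yx)), and ∂ : A → A a continuous ℂ-linear derivation. For self-adjoint f ∈ A and t ∈ ℝ define Ω_f(t) := ½·τ( (∂ e^{−tf/2})·(∂ e^{tf}) + (∂ e^{tf/2})·(∂ e^{tf})·e^{−tf} ). Then, as t → 0, Ω_f(t)/t⁴ converges to (1/16)·τ( f²·(∂f)·(∂f) − f·(∂f)·f·(∂f) ); in particular Ω_f(t) vanishes to fourth order at t = 0 (Ω_f(0) = Ω_f'(0) = Ω_f''(0) = Ω_f'''(0) = 0). -/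

import Mathlib

set_option linter.unusedSectionVars false
set_option maxHeartbeats 2000000

open NormedSpace Topology Asymptotics Filter Polynomial Nat

section GBaux
variable {A : Type*} [NormedRing A] [NormedAlgebra ℂ A] [CompleteSpace A]

private lemma exp_taylor_isBigO {A : Type*} [NormedRing A] [NormedAlgebra ℂ A]
    [CompleteSpace A] (x : A) :
    (fun t : ℝ => exp ((t:ℂ) • x) - ∑ n ∈ Finset.range 5, ((t:ℂ)^n * (n ! : ℂ)⁻¹) • x ^ n)
      =O[𝓝 (0:ℝ)] fun t : ℝ => |t| ^ 5 := by
  have hsum : ∀ t : ℝ, Summable (fun n : ℕ => ((t:ℂ)^n * (n ! : ℂ)⁻¹) • x ^ n) := by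
    intro t
    have := expSeries_summable' (𝕂 := ℂ) ((t:ℂ) • x)
    exact this.congr fun n => by rw [_root_.smul_pow, smul_smul, mul_comm]
  have hexp : ∀ t : ℝ, exp ((t:ℂ) • x) = ∑' n : ℕ, ((t:ℂ)^n * (n ! : ℂ)⁻¹) • x ^ n := by
    intro t
    rw [exp_eq_tsum ℂ]
    exact tsum_congr fun n => by rw [_root_.smul_pow, smul_smul, mul_comm]
  have hdiff : ∀ t : ℝ, exp ((t:ℂ) • x) - ∑ n ∈ Finset.range 5, ((t:ℂ)^n * (n ! : ℂ)⁻¹) • x ^ n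
      = ∑' n : ℕ, ((t:ℂ)^(n+5) * (((n+5) ! : ℕ):ℂ)⁻¹) • x ^ (n+5) := by
    intro t
    rw [hexp t, ← Summable.sum_add_tsum_nat_add 5 (hsum t), add_sub_cancel_left]
  rw [isBigO_iff]
  refine ⟨‖x‖^5 * Real.exp ‖x‖, ?_⟩
  have h1 : ∀ᶠ t : ℝ in 𝓝 0, |t| ≤ 1 := by
    have h2 : Metric.closedBall (0:ℝ) 1 ∈ 𝓝 (0:ℝ) := Metric.closedBall_mem_nhds 0 one_pos
    filter_upwards [h2] with t ht
    simpa [Real.dist_eq] using ht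
  filter_upwards [h1] with t ht
  rw [hdiff t]
  have hle : ∀ n : ℕ, ‖((t:ℂ)^(n+5) * (((n+5) ! : ℕ):ℂ)⁻¹) • x ^ (n+5)‖
      ≤ |t|^5 * (‖x‖^5 * (‖x‖^n / n !)) := by
    intro n
    rw [norm_smul, norm_mul, norm_pow, norm_inv, Complex.norm_real, Real.norm_eq_abs,
      Complex.norm_natCast]
    have e1 : |t|^(n+5) ≤ |t|^5 := pow_le_pow_of_le_one (abs_nonneg t) ht (by omega)
    have e2 : ((((n+5) ! : ℕ)):ℝ)⁻¹ ≤ ((n ! : ℕ):ℝ)⁻¹ := by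
      apply inv_anti₀
      · positivity
      · exact_mod_cast Nat.factorial_le (by omega)
    have e3 : ‖x ^ (n+5)‖ ≤ ‖x‖^(n+5) := norm_pow_le' x (by omega)
    calc |t|^(n+5) * (((n+5) ! : ℕ):ℝ)⁻¹ * ‖x ^ (n+5)‖
        ≤ |t|^5 * ((n ! : ℕ):ℝ)⁻¹ * ‖x‖^(n+5) := by
          exact mul_le_mul (mul_le_mul e1 e2 (by positivity) (by positivity)) e3 (norm_nonneg _) (by positivity)

      _ = |t|^5 * (‖x‖^5 * (‖x‖^n / n !)) := by
          rw [pow_add, div_eq_mul_inv]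
          ring
  have hmaj : Summable fun n : ℕ => |t|^5 * (‖x‖^5 * (‖x‖^n / n !)) :=
    ((Real.summable_pow_div_factorial ‖x‖).mul_left _).mul_left _
  have hnorm : Summable fun n : ℕ => ‖((t:ℂ)^(n+5) * (((n+5) ! : ℕ):ℂ)⁻¹) • x ^ (n+5)‖ :=
    Summable.of_nonneg_of_le (fun n => norm_nonneg _) hle hmaj
  calc ‖∑' n : ℕ, ((t:ℂ)^(n+5) * (((n+5) ! : ℕ):ℂ)⁻¹) • x ^ (n+5)‖
      ≤ ∑' n : ℕ, ‖((t:ℂ)^(n+5) * (((n+5) ! : ℕ):ℂ)⁻¹) • x ^ (n+5)‖ := norm_tsum_le_tsum_norm hnorm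
    _ ≤ ∑' n : ℕ, |t|^5 * (‖x‖^5 * (‖x‖^n / n !)) := Summable.tsum_le_tsum hle hnorm hmaj
    _ = |t|^5 * (‖x‖^5 * Real.exp ‖x‖) := by
        rw [tsum_mul_left, tsum_mul_left]
        congr 2
        rw [Real.exp_eq_exp_ℝ, exp_eq_tsum_div]
    _ ≤ ‖x‖^5 * Real.exp ‖x‖ * ‖|t|^5‖ := by
        rw [Real.norm_eq_abs, abs_pow, abs_abs]
        ring_nf
        exact le_refl _
private lemma poly_vanish : ∀ (n : ℕ) (r : Polynomial ℂ),
    ((fun t : ℝ => r.eval (t:ℂ)) =O[𝓝[≠] (0:ℝ)] fun t => |t| ^ n) →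
    ∀ k < n, r.coeff k = 0 := by
  intro n
  induction n with
  | zero => exact fun r _ k hk => absurd hk (Nat.not_lt_zero k)
  | succ n ih =>
    intro r h k hk
    have hcont : Continuous fun t : ℝ => r.eval (t:ℂ) :=
      (r.continuous_aeval).comp Complex.continuous_ofReal
    have htend : Tendsto (fun t : ℝ => r.eval (t:ℂ)) (𝓝[≠] (0:ℝ)) (𝓝 (r.eval (0:ℂ))) := by
      have := hcont.tendsto 0
      simpa using this.mono_left nhdsWithin_le_nhds
    have hzero : Tendsto (fun t : ℝ => r.eval (t:ℂ)) (𝓝[≠] (0:ℝ)) (𝓝 0) := by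
      apply h.trans_tendsto
      have : Tendsto (fun t : ℝ => |t| ^ (n+1)) (𝓝 (0:ℝ)) (𝓝 0) := by
        have : Tendsto (fun t : ℝ => |t|) (𝓝 (0:ℝ)) (𝓝 0) := by
          simpa using continuous_abs.tendsto (0:ℝ)
        simpa [zero_pow] using this.pow (n+1)
      exact this.mono_left nhdsWithin_le_nhds
    have h0 : r.coeff 0 = 0 := by
      rw [Polynomial.coeff_zero_eq_eval_zero]
      exact tendsto_nhds_unique htend hzero
    have hr : r = X * r.divX := by
      have := Polynomial.X_mul_divX_add r
      rw [h0, map_zero, add_zero] at this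
      exact this.symm
    have hdiv : (fun t : ℝ => (r.divX).eval (t:ℂ)) =O[𝓝[≠] (0:ℝ)] fun t => |t| ^ n := by
      rw [isBigO_iff] at h ⊢
      obtain ⟨C, hC⟩ := h
      refine ⟨C, ?_⟩
      filter_upwards [hC, self_mem_nhdsWithin] with t hb (ht : t ≠ 0)
      rw [hr] at hb
      simp only [eval_mul, eval_X, norm_mul] at hb
      have habs : ‖(t:ℂ)‖ = |t| := Complex.norm_real t
      rw [habs] at hb
      have ht' : (0:ℝ) < |t| := abs_pos.2 ht
      rw [norm_pow, Real.norm_eq_abs, abs_abs, pow_succ] at hb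
      rw [norm_pow, Real.norm_eq_abs, abs_abs]
      refine le_of_mul_le_mul_right ?_ ht'
      calc ‖(r.divX).eval (t:ℂ)‖ * |t| = |t| * ‖(r.divX).eval (t:ℂ)‖ := mul_comm _ _
        _ ≤ C * (|t|^n * |t|) := hb
        _ = C * |t|^n * |t| := by ring
    match k with
    | 0 => exact h0
    | (k+1) =>
      rw [← Polynomial.coeff_divX]
      exact ih r.divX hdiv k (Nat.lt_of_succ_lt_succ hk)

private lemma analyticAt_expC {A : Type*} [NormedRing A] [NormedAlgebra ℂ A]
    [CompleteSpace A] (x : A) : AnalyticAt ℝ (fun t : ℝ => exp ((t:ℂ) • x)) 0 := by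
  have h1 : AnalyticAt ℝ (fun t : ℝ => t • x) 0 :=
    (ContinuousLinearMap.toSpanSingleton ℝ x).analyticAt 0
  have h2 : AnalyticAt ℝ exp (0 : A) :=
    (NormedSpace.exp_analytic (𝕂 := ℂ) _).restrictScalars (𝕜 := ℝ)
  have he : (fun t : ℝ => exp ((t:ℂ) • x)) = exp ∘ (fun t : ℝ => t • x) := by
    funext t
    simp [Function.comp, Complex.coe_smul]
  rw [he]
  exact h2.comp_of_eq h1 (by simp)

private noncomputable def trunc (x : A) (t : ℝ) : A :=
  ∑ n ∈ Finset.range 5, ((t:ℂ)^n * (Nat.factorial n : ℂ)⁻¹) • x ^ n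

private noncomputable def gbw (c : ℂ) (n : ℕ) : ℂ := c ^ n * (Nat.factorial n : ℂ)⁻¹

private noncomputable def GBW (τ : A →L[ℂ] ℂ) (D : A →L[ℂ] A) (f : A) : Polynomial ℂ :=
  Polynomial.C (2⁻¹ : ℂ) *
   ((∑ i ∈ Finset.range 5, ∑ j ∈ Finset.range 5,
      Polynomial.C (gbw (-2⁻¹) i * gbw 1 j * τ (D (f^i) * D (f^j))) * Polynomial.X ^ (i+j)) +
    ∑ i ∈ Finset.range 5, ∑ j ∈ Finset.range 5, ∑ k ∈ Finset.range 5,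
      Polynomial.C (gbw 2⁻¹ i * gbw 1 j * gbw (-1) k * τ (D (f^i) * D (f^j) * f^k))
        * Polynomial.X ^ (i+j+k))

private lemma trunc_smul (c : ℂ) (f : A) (t : ℝ) :
    trunc (c • f) t = ∑ n ∈ Finset.range 5, ((t:ℂ)^n * gbw c n) • f^n := by
  refine Finset.sum_congr rfl fun n _ => ?_
  rw [_root_.smul_pow, smul_smul, gbw]
  congr 1
  ring

private lemma D_trunc (D : A →L[ℂ] A) (c : ℂ) (f : A) (t : ℝ) :
    D (trunc (c • f) t) = ∑ n ∈ Finset.range 5, ((t:ℂ)^n * gbw c n) • D (f^n) := by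
  rw [trunc_smul, map_sum]
  refine Finset.sum_congr rfl fun n _ => ?_
  rw [map_smul]

private lemma expand2 (τ : A →L[ℂ] ℂ) (s : Finset ℕ) (a b : ℕ → ℂ) (u v : ℕ → A) :
    τ ((∑ i ∈ s, a i • u i) * (∑ j ∈ s, b j • v j))
      = ∑ i ∈ s, ∑ j ∈ s, a i * b j * τ (u i * v j) := by
  rw [Finset.sum_mul_sum, map_sum]
  refine Finset.sum_congr rfl fun i _ => ?_
  rw [map_sum]
  refine Finset.sum_congr rfl fun j _ => ?_
  rw [smul_mul_smul_comm, map_smul, smul_eq_mul]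

private lemma expand3 (τ : A →L[ℂ] ℂ) (s : Finset ℕ) (a b c : ℕ → ℂ) (u v w : ℕ → A) :
    τ ((∑ i ∈ s, a i • u i) * (∑ j ∈ s, b j • v j) * (∑ k ∈ s, c k • w k))
      = ∑ i ∈ s, ∑ j ∈ s, ∑ k ∈ s, a i * b j * c k * τ (u i * v j * w k) := by
  rw [Finset.sum_mul_sum, Finset.sum_mul, map_sum]
  refine Finset.sum_congr rfl fun i _ => ?_
  rw [Finset.sum_mul, map_sum]
  refine Finset.sum_congr rfl fun j _ => ?_
  rw [Finset.mul_sum, map_sum]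
  refine Finset.sum_congr rfl fun k _ => ?_
  rw [smul_mul_smul_comm, smul_mul_smul_comm, map_smul, smul_eq_mul]
  try ring

private lemma GBW_eval (τ : A →L[ℂ] ℂ) (D : A →L[ℂ] A) (f : A) (t : ℝ) :
    (1/2:ℂ) * τ (D (trunc ((-2⁻¹:ℂ) • f) t) * D (trunc ((1:ℂ) • f) t)
      + D (trunc ((2⁻¹:ℂ) • f) t) * D (trunc ((1:ℂ) • f) t) * trunc ((-1:ℂ) • f) t)
     = (GBW τ D f).eval (t:ℂ) := by
  rw [D_trunc, D_trunc, D_trunc, trunc_smul, map_add, expand2, expand3, GBW]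
  simp only [Polynomial.eval_mul, Polynomial.eval_add, Polynomial.eval_C,
    Polynomial.eval_finset_sum, Polynomial.eval_pow, Polynomial.eval_X]
  rw [mul_add, mul_add]
  congr 1
  · rw [Finset.mul_sum, Finset.mul_sum]
    refine Finset.sum_congr rfl fun i _ => ?_
    rw [Finset.mul_sum, Finset.mul_sum]
    refine Finset.sum_congr rfl fun j _ => ?_
    rw [pow_add]
    ring
  · rw [Finset.mul_sum, Finset.mul_sum]
    refine Finset.sum_congr rfl fun i _ => ?_
    rw [Finset.mul_sum, Finset.mul_sum]
    refine Finset.sum_congr rfl fun j _ => ?_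
    rw [Finset.mul_sum, Finset.mul_sum]
    refine Finset.sum_congr rfl fun k _ => ?_
    rw [pow_add, pow_add]
    ring



private lemma trunc_isBigO (x : A) :
    (fun t : ℝ => exp ((t:ℂ) • x) - trunc x t) =O[𝓝 (0:ℝ)] fun t : ℝ => |t| ^ 5 := by
  simpa [trunc] using exp_taylor_isBigO x

end GBaux

/-- **Fourth-order vanishing of the perturbed Gauss–Bonnet trace.**
For the perturbed metric `diag(e^{tf}, 1)` on the noncommutative two-torus, the
Gauss–Bonnet trace `Ω_f(t) = ½τ((∂e^{−tf/2})(∂e^{tf}) + (∂e^{tf/2})(∂e^{tf})e^{−tf})`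
satisfies `Ω_f(t)/t⁴ → (1/16)·τ(f²(∂f)² − f(∂f)f(∂f))` as `t → 0`; in particular
`Ω_f(0) = Ω_f'(0) = Ω_f''(0) = Ω_f'''(0) = 0`. -/
theorem stmt_17 {A : Type*} [NormedRing A] [StarRing A] [CStarRing A]
    [NormedAlgebra ℂ A] [CompleteSpace A] [StarModule ℂ A]
    (τ : A →L[ℂ] ℂ) (hτ : ∀ x y : A, τ (x * y) = τ (y * x))
    (D : A →L[ℂ] A) (hD : ∀ x y : A, D (x * y) = D x * y + x * D y)
    (f : A) (hf : IsSelfAdjoint f) :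
    let Ω : ℝ → ℂ := fun t => (1/2 : ℂ) *
      τ (D (exp ((-(t : ℂ)/2) • f)) * D (exp ((t : ℂ) • f))
        + D (exp (((t : ℂ)/2) • f)) * D (exp ((t : ℂ) • f)) * exp ((-(t : ℂ)) • f))
    Filter.Tendsto (fun t : ℝ => Ω t / (t : ℂ) ^ 4) (𝓝[≠] (0 : ℝ))
      (𝓝 ((1/16 : ℂ) * τ (f * f * D f * D f - f * D f * (f * D f)))) ∧
    Ω 0 = 0 ∧ deriv Ω 0 = 0 ∧ iteratedDeriv 2 Ω 0 = 0 ∧ iteratedDeriv 3 Ω 0 = 0 := by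
  intro Ω
  set L : ℂ := (1/16 : ℂ) * τ (f * f * D f * D f - f * D f * (f * D f)) with hLdef
  have hD1 : D (1:A) = 0 := by
    have h := hD 1 1
    rw [mul_one, one_mul, mul_one] at h
    exact (left_eq_add.mp h)
  set x₁ : A := (-2⁻¹ : ℂ) • f with hx₁
  set x₂ : A := (1 : ℂ) • f with hx₂
  set x₃ : A := (2⁻¹ : ℂ) • f with hx₃
  set x₄ : A := (-1 : ℂ) • f with hx₄
  have hc1 : ∀ t : ℝ, (-(t:ℂ)/2) • f = (t:ℂ) • x₁ := by
    intro t; rw [hx₁, smul_smul]; congr 1 <;> ring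
  have hc2 : ∀ t : ℝ, (t:ℂ) • f = (t:ℂ) • x₂ := by
    intro t; rw [hx₂, one_smul]
  have hc3 : ∀ t : ℝ, ((t:ℂ)/2) • f = (t:ℂ) • x₃ := by
    intro t; rw [hx₃, smul_smul]; congr 1 <;> ring
  have hc4 : ∀ t : ℝ, (-(t:ℂ)) • f = (t:ℂ) • x₄ := by
    intro t; rw [hx₄, smul_smul]; congr 1 <;> ring
  have hΩ : ∀ t : ℝ, Ω t = (1/2 : ℂ) *
      τ (D (exp ((t:ℂ) • x₁)) * D (exp ((t:ℂ) • x₂))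
        + D (exp ((t:ℂ) • x₃)) * D (exp ((t:ℂ) • x₂)) * exp ((t:ℂ) • x₄)) := by
    intro t
    show (1/2 : ℂ) * τ (D (exp ((-(t : ℂ)/2) • f)) * D (exp ((t : ℂ) • f))
        + D (exp (((t : ℂ)/2) • f)) * D (exp ((t : ℂ) • f)) * exp ((-(t : ℂ)) • f)) = _
    rw [hc1 t, hc3 t, hc4 t, hc2 t]
  -- continuity / boundedness
  have hcontsm : ∀ x : A, Continuous fun t : ℝ => (t:ℂ) • x := fun x =>
    Complex.continuous_ofReal.smul continuous_const
  have hcontT : ∀ x : A, Continuous fun t : ℝ => trunc x t := by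
    intro x
    unfold trunc
    exact continuous_finset_sum _ fun n _ =>
      ((Complex.continuous_ofReal.pow n).mul continuous_const).smul continuous_const
  have hbDE : ∀ x : A, (fun t : ℝ => D (exp ((t:ℂ) • x))) =O[𝓝 (0:ℝ)] (fun _ => (1:ℝ)) :=
    fun x => ((D.continuous.comp ((continuous_iff_continuousAt.2 fun y => (NormedSpace.exp_analytic (𝕂 := ℂ) y).continuousAt).comp (hcontsm x))).tendsto 0).isBigO_one ℝ
  have hbDT : ∀ x : A, (fun t : ℝ => D (trunc x t)) =O[𝓝 (0:ℝ)] (fun _ => (1:ℝ)) :=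
    fun x => ((D.continuous.comp (hcontT x)).tendsto 0).isBigO_one ℝ
  have hbT : ∀ x : A, (fun t : ℝ => trunc x t) =O[𝓝 (0:ℝ)] (fun _ => (1:ℝ)) :=
    fun x => ((hcontT x).tendsto 0).isBigO_one ℝ
  have hdDE : ∀ x : A, (fun t : ℝ => D (exp ((t:ℂ) • x)) - D (trunc x t)) =O[𝓝 (0:ℝ)]
      (fun t => |t|^5) := by
    intro x
    have h1 : (fun t : ℝ => D (exp ((t:ℂ) • x) - trunc x t)) =O[𝓝 (0:ℝ)] (fun t => |t|^5) :=
      (D.isBigO_comp _ _).trans (trunc_isBigO x)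
    simpa [map_sub] using h1
  -- product estimates
  have hprod2 : (fun t : ℝ => D (exp ((t:ℂ) • x₁)) * D (exp ((t:ℂ) • x₂))
      - D (trunc x₁ t) * D (trunc x₂ t)) =O[𝓝 (0:ℝ)] fun t => |t|^5 := by
    have hid : ∀ t : ℝ, D (exp ((t:ℂ) • x₁)) * D (exp ((t:ℂ) • x₂))
        - D (trunc x₁ t) * D (trunc x₂ t)
        = D (exp ((t:ℂ) • x₁)) * (D (exp ((t:ℂ) • x₂)) - D (trunc x₂ t))
          + (D (exp ((t:ℂ) • x₁)) - D (trunc x₁ t)) * D (trunc x₂ t) := by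
      intro t; noncomm_ring
    have h1 : (fun t : ℝ => D (exp ((t:ℂ) • x₁)) * (D (exp ((t:ℂ) • x₂)) - D (trunc x₂ t)))
        =O[𝓝 (0:ℝ)] fun t => |t|^5 := by
      simpa using (hbDE x₁).mul (hdDE x₂)
    have h2 : (fun t : ℝ => (D (exp ((t:ℂ) • x₁)) - D (trunc x₁ t)) * D (trunc x₂ t))
        =O[𝓝 (0:ℝ)] fun t => |t|^5 := by
      simpa using (hdDE x₁).mul (hbDT x₂)
    exact (h1.add h2).congr (fun t => (hid t).symm) (fun t => rfl)
  have hprod3 : (fun t : ℝ => D (exp ((t:ℂ) • x₃)) * D (exp ((t:ℂ) • x₂)) * exp ((t:ℂ) • x₄)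
      - D (trunc x₃ t) * D (trunc x₂ t) * trunc x₄ t) =O[𝓝 (0:ℝ)] fun t => |t|^5 := by
    have hid : ∀ t : ℝ, D (exp ((t:ℂ) • x₃)) * D (exp ((t:ℂ) • x₂)) * exp ((t:ℂ) • x₄)
        - D (trunc x₃ t) * D (trunc x₂ t) * trunc x₄ t
        = D (exp ((t:ℂ) • x₃)) * D (exp ((t:ℂ) • x₂)) * (exp ((t:ℂ) • x₄) - trunc x₄ t)
          + D (exp ((t:ℂ) • x₃)) * (D (exp ((t:ℂ) • x₂)) - D (trunc x₂ t)) * trunc x₄ t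
          + (D (exp ((t:ℂ) • x₃)) - D (trunc x₃ t)) * D (trunc x₂ t) * trunc x₄ t := by
      intro t; noncomm_ring
    have h1 : (fun t : ℝ => D (exp ((t:ℂ) • x₃)) * D (exp ((t:ℂ) • x₂))
        * (exp ((t:ℂ) • x₄) - trunc x₄ t)) =O[𝓝 (0:ℝ)] fun t => |t|^5 := by
      simpa using ((hbDE x₃).mul (hbDE x₂)).mul (trunc_isBigO x₄)
    have h2 : (fun t : ℝ => D (exp ((t:ℂ) • x₃)) * (D (exp ((t:ℂ) • x₂)) - D (trunc x₂ t))
        * trunc x₄ t) =O[𝓝 (0:ℝ)] fun t => |t|^5 := by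
      simpa using ((hbDE x₃).mul (hdDE x₂)).mul (hbT x₄)
    have h3 : (fun t : ℝ => (D (exp ((t:ℂ) • x₃)) - D (trunc x₃ t)) * D (trunc x₂ t)
        * trunc x₄ t) =O[𝓝 (0:ℝ)] fun t => |t|^5 := by
      simpa using ((hdDE x₃).mul (hbDT x₂)).mul (hbT x₄)
    exact ((h1.add h2).add h3).congr (fun t => (hid t).symm) (fun t => rfl)
  -- comparison with the polynomial GBW
  have hOW : (fun t : ℝ => Ω t - (GBW τ D f).eval (t:ℂ)) =O[𝓝 (0:ℝ)] fun t => |t|^5 := by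
    have hsum := hprod2.add hprod3
    have hτc := (τ.isBigO_comp _ (𝓝 (0:ℝ))).trans hsum
    have := hτc.const_mul_left (1/2 : ℂ)
    refine this.congr (fun t => ?_) (fun t => rfl)
    rw [hΩ t, ← GBW_eval τ D f t, ← hx₁, ← hx₂, ← hx₃, ← hx₄, ← mul_sub, ← map_sub]
    congr 2
    abel
  -- coefficients of GBW
  have hcoeff012 : (GBW τ D f).coeff 0 = 0 ∧ (GBW τ D f).coeff 1 = 0 ∧ (GBW τ D f).coeff 2 = 0 := by
    refine ⟨?_, ?_, ?_⟩ <;>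
    · simp only [GBW, Finset.sum_range_succ, Finset.sum_range_zero,
        Polynomial.coeff_C_mul, Polynomial.coeff_add, Polynomial.finset_sum_coeff,
        Polynomial.coeff_X_pow]
      norm_num [gbw, Nat.factorial, pow_zero, hD1, pow_one]
  have hcoeff3 : (GBW τ D f).coeff 3 = 0 := by
    simp only [GBW, Finset.sum_range_succ, Finset.sum_range_zero,
      Polynomial.coeff_C_mul, Polynomial.coeff_add, Polynomial.finset_sum_coeff,
      Polynomial.coeff_X_pow]
    norm_num [gbw, Nat.factorial, pow_zero, hD1, pow_one]
    have hDf2 : D (f^2) = D f * f + f * D f := by rw [sq, hD]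
    rw [hDf2]
    simp only [mul_add, add_mul, map_add, mul_assoc]
    have e1 : τ (D f * (D f * f)) = τ (f * (D f * D f)) := by
      rw [← mul_assoc]
      exact hτ (D f * D f) f
    have e2 : τ (D f * (f * D f)) = τ (f * (D f * D f)) := by
      have h := hτ (D f) (f * D f)
      rw [h, mul_assoc]
    linear_combination (-(1/2) : ℂ) * e1 + (1/4 : ℂ) * e2
  have hcoeff4 : (GBW τ D f).coeff 4 = L := by
    simp only [GBW, Finset.sum_range_succ, Finset.sum_range_zero,
      Polynomial.coeff_C_mul, Polynomial.coeff_add, Polynomial.finset_sum_coeff,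
      Polynomial.coeff_X_pow]
    norm_num [gbw, Nat.factorial, pow_zero, hD1, pow_one]
    have hDf2 : D (f^2) = D f * f + f * D f := by rw [sq, hD]
    rw [hLdef, hDf2]
    simp only [map_sub, mul_add, add_mul, map_add, mul_assoc, pow_two]
    have e1 : τ (D f * (f * (D f * f))) = τ (f * (D f * (f * D f))) := by
      have h := hτ (D f) (f * (D f * f))
      rw [h]
      simp only [mul_assoc]
    have e2 : τ (D f * (f * (f * D f))) = τ (f * (f * (D f * D f))) := by
      have h := hτ (D f) (f * (f * D f))
      rw [h]
      simp only [mul_assoc]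
    linear_combination (-(1/8) : ℂ) * e1 + (1/16 : ℂ) * e2

  -- difference polynomial and X^5 divisibility
  have hXco : ∀ d : ℕ, (Polynomial.C L * Polynomial.X ^ 4).coeff d = if d = 4 then L else 0 := by
    intro d
    rw [Polynomial.coeff_C_mul, Polynomial.coeff_X_pow]
    split <;> simp
  have hRco : ∀ d < 5, (GBW τ D f - Polynomial.C L * Polynomial.X ^ 4).coeff d = 0 := by
    intro d hd
    interval_cases d <;>
      simp [Polynomial.coeff_sub, hXco, hcoeff012.1, hcoeff012.2.1, hcoeff012.2.2, hcoeff3,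
        hcoeff4]
  obtain ⟨q, hq⟩ : (Polynomial.X : Polynomial ℂ)^5 ∣ (GBW τ D f - Polynomial.C L * Polynomial.X ^ 4) :=
    Polynomial.X_pow_dvd_iff.mpr hRco
  have hWL : ∀ t : ℝ, (GBW τ D f).eval (t:ℂ) - L * (t:ℂ)^4 = (t:ℂ)^5 * q.eval (t:ℂ) := by
    intro t
    have h := congrArg (Polynomial.eval (t:ℂ)) hq
    simpa using h
  have hql : (fun t : ℝ => (GBW τ D f).eval (t:ℂ) - L * (t:ℂ)^4) =O[𝓝 (0:ℝ)] fun t => |t|^5 := by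
    have h5 : (fun t : ℝ => (t:ℂ)^5) =O[𝓝 (0:ℝ)] fun t => |t|^5 := by
      rw [isBigO_iff]
      refine ⟨1, ?_⟩
      filter_upwards with t
      simp [Complex.norm_real, Real.norm_eq_abs, abs_abs]
    have hq0 : (fun t : ℝ => q.eval (t:ℂ)) =O[𝓝 (0:ℝ)] (fun _ => (1:ℝ)) :=
      ((q.continuous_aeval.comp Complex.continuous_ofReal).tendsto 0).isBigO_one ℝ
    exact ((h5.mul hq0).congr (fun t => rfl) (fun t => mul_one _)).congr
      (fun t => (hWL t).symm) (fun t => rfl)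
  have hfull : (fun t : ℝ => Ω t - L * (t:ℂ)^4) =O[𝓝 (0:ℝ)] fun t => |t|^5 := by
    have h := hOW.add hql
    exact h.congr (fun t => sub_add_sub_cancel _ _ _) (fun t => rfl)
  -- the limit
  have hlim : Filter.Tendsto (fun t : ℝ => Ω t / (t : ℂ) ^ 4) (𝓝[≠] (0:ℝ)) (𝓝 L) := by
    have h54 : (fun t : ℝ => |t|^5) =o[𝓝 (0:ℝ)] fun t : ℝ => |t|^4 := by
      have habs : Filter.Tendsto (fun t : ℝ => |t|) (𝓝 0) (𝓝 0) := by
        simpa using continuous_abs.tendsto (0:ℝ)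
      simpa [Function.comp_def] using (isLittleO_pow_pow (𝕜 := ℝ) (m := 4) (n := 5) (by norm_num)).comp_tendsto habs
    have h4eq : (fun t : ℝ => |t|^4) =O[𝓝[≠] (0:ℝ)] fun t : ℝ => (t:ℂ)^4 := by
      rw [isBigO_iff]
      refine ⟨1, ?_⟩
      filter_upwards with t
      simp [Complex.norm_real, Real.norm_eq_abs, abs_abs]
    have ho : (fun t : ℝ => Ω t - L * (t:ℂ)^4) =o[𝓝[≠] (0:ℝ)] fun t : ℝ => (t:ℂ)^4 :=
      ((hfull.mono nhdsWithin_le_nhds).trans_isLittleO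
        (h54.mono nhdsWithin_le_nhds)).trans_isBigO h4eq
    have h0 := ho.tendsto_div_nhds_zero
    have hadd := h0.add (tendsto_const_nhds (x := L))
    rw [zero_add] at hadd
    refine Filter.Tendsto.congr' ?_ hadd
    filter_upwards [self_mem_nhdsWithin] with t (ht : t ≠ 0)
    have h4 : ((t:ℂ))^4 ≠ 0 := pow_ne_zero _ (Complex.ofReal_ne_zero.mpr ht)
    rw [sub_div, mul_div_cancel_right₀ L h4, sub_add_cancel]
  -- value at 0
  have hΩ0 : Ω 0 = 0 := by
    rw [hΩ 0]
    simp [hD1, hx₁, hx₂, hx₃, hx₄]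
  -- analyticity
  have hA1 : ∀ x : A, AnalyticAt ℝ (fun t : ℝ => D (exp ((t:ℂ) • x))) 0 := by
    intro x
    exact ((D.restrictScalars ℝ).analyticAt _).comp_of_eq (analyticAt_expC x) rfl
  have hAnF : AnalyticAt ℝ (fun t : ℝ => (1/2 : ℂ) *
      τ (D (exp ((t:ℂ) • x₁)) * D (exp ((t:ℂ) • x₂))
        + D (exp ((t:ℂ) • x₃)) * D (exp ((t:ℂ) • x₂)) * exp ((t:ℂ) • x₄))) 0 := by
    apply AnalyticAt.mul analyticAt_const
    exact ((τ.restrictScalars ℝ).analyticAt _).comp_of_eq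
      (((hA1 x₁).mul (hA1 x₂)).add (((hA1 x₃).mul (hA1 x₂)).mul (analyticAt_expC x₄))) rfl
  have hAn : AnalyticAt ℝ Ω 0 := by
    rw [show Ω = _ from funext hΩ]
    exact hAnF
  obtain ⟨p, hp⟩ := hAn
  have hpO := hp.isBigO_sub_partialSum_pow 5
  obtain ⟨r, hpb⟩ := hp
  have hiter : ∀ n : ℕ, iteratedDeriv n Ω 0 = (n !) • p.coeff n := by
    intro n
    rw [iteratedDeriv_eq_iteratedFDeriv, ← hpb.factorial_smul (1:ℝ) n]
    rfl
  have hP5eval : ∀ y : ℝ,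
      (∑ k ∈ Finset.range 5, Polynomial.C (p.coeff k) * Polynomial.X ^ k).eval (y:ℂ)
        = p.partialSum 5 y := by
    intro y
    simp only [Polynomial.eval_finset_sum, Polynomial.eval_mul, Polynomial.eval_C,
      Polynomial.eval_pow, Polynomial.eval_X, FormalMultilinearSeries.partialSum]
    refine Finset.sum_congr rfl fun k _ => ?_
    rw [FormalMultilinearSeries.apply_eq_pow_smul_coeff, Complex.real_smul]
    rw [Complex.ofReal_pow]
    ring
  have hGP : (fun t : ℝ =>
      ((GBW τ D f) - ∑ k ∈ Finset.range 5, Polynomial.C (p.coeff k) * Polynomial.X ^ k).eval (t:ℂ))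
        =O[𝓝[≠] (0:ℝ)] fun t => |t|^5 := by
    have h1 : (fun t : ℝ => Ω t - p.partialSum 5 t) =O[𝓝 (0:ℝ)] fun t => |t|^5 := by
      have h := hpO
      simp only [zero_add] at h
      exact h.congr (fun t => rfl) (fun t => by rw [Real.norm_eq_abs])
    have h2 := hOW.neg_left.add h1
    refine ((h2.congr (fun t => ?_) (fun t => rfl)).mono nhdsWithin_le_nhds)
    rw [Polynomial.eval_sub, hP5eval]
    ring
  have hpc : ∀ k, k < 5 → p.coeff k = (GBW τ D f).coeff k := by
    intro k hk
    have h := poly_vanish 5 _ hGP k hk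
    rw [Polynomial.coeff_sub, sub_eq_zero] at h
    rw [h]
    simp [Polynomial.finset_sum_coeff, Polynomial.coeff_C_mul, Polynomial.coeff_X_pow,
      Finset.mem_range, hk]
  have hderiv : ∀ n, n < 5 → iteratedDeriv n Ω 0 = (n !) • (GBW τ D f).coeff n := by
    intro n hn
    rw [hiter n, hpc n hn]
  refine ⟨hlim, hΩ0, ?_, ?_, ?_⟩
  · rw [← iteratedDeriv_one, hderiv 1 (by norm_num), hcoeff012.2.1, smul_zero]
  · rw [hderiv 2 (by norm_num), hcoeff012.2.2, smul_zero]
  · rw [hderiv 3 (by norm_num), hcoeff3, smul_zero]
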